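/- Define coefficients a_k by a_{-1} = 0, a_0 = 1, and a_k = 2*a_{k-1} - a_{k-2} + C(r+1, k) * r^k for k ≥ 1, where r ≥ 1 is a fixed integer. Then for all real x, y, (x + r*y)^(r+1) - (r+1)^(r+1) * x * y^r = (x - y)^2 * ∑_{k=0}^{r-1} a_k * x^(r-1-k) * y^k. -/

import Mathlib

open Finset

noncomputable def cc (r j : ℕ) : ℝ := ((r+1).choose j : ℝ) * (r:ℝ)^j
noncomputable def gg (r k : ℕ) : ℝ := ∑ j ∈ range (k+1), cc r j
noncomputable def ff (r k : ℕ) : ℝ := ∑ m ∈ range (k+1), gg r m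

noncomputable def Dif (u : ℕ → ℝ) : ℕ → ℝ
  | 0 => u 0
  | (k+1) => u (k+1) - u k

lemma gg_succ (r k : ℕ) : gg r (k+1) = gg r k + cc r (k+1) := sum_range_succ _ _
lemma ff_succ (r k : ℕ) : ff r (k+1) = ff r k + gg r (k+1) := sum_range_succ _ _
lemma cc_zero (r : ℕ) : cc r 0 = 1 := by simp [cc]
lemma gg_zero (r : ℕ) : gg r 0 = 1 := by simp [gg, cc_zero]
lemma ff_zero (r : ℕ) : ff r 0 = 1 := by simp [ff, gg_zero]

lemma ff_rec (r k : ℕ) : ff r (k+2) = 2 * ff r (k+1) - ff r k + cc r (k+2) := by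
  have e : k + 2 = (k+1) + 1 := rfl
  rw [e, ff_succ r (k+1), gg_succ r (k+1), ff_succ r k]
  ring

lemma Dif_ff (r k : ℕ) : Dif (ff r) k = gg r k := by
  cases k with
  | zero => simp [Dif, ff_zero, gg_zero]
  | succ k => simp [Dif, ff_succ]

lemma tele (x y : ℝ) (u : ℕ → ℝ) : ∀ n, (x - y) * ∑ k ∈ range (n+1), u k * x^(n-k) * y^k
    = ∑ k ∈ range (n+1), Dif u k * x^(n+1-k) * y^k - u n * y^(n+1) := by
  intro n
  induction n with
  | zero => simp [Dif]; ring
  | succ n ih =>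
    have hL : ∑ k ∈ range (n+2), u k * x^(n+1-k) * y^k
        = x * ∑ k ∈ range (n+1), u k * x^(n-k) * y^k + u (n+1) * y^(n+1) := by
      rw [sum_range_succ, mul_sum]
      congr 1
      · apply sum_congr rfl
        intro k hk
        rw [mem_range] at hk
        have h : n + 1 - k = (n - k) + 1 := by omega
        rw [h]; ring
      · simp
    have hR : ∑ k ∈ range (n+2), Dif u k * x^(n+2-k) * y^k
        = x * ∑ k ∈ range (n+1), Dif u k * x^(n+1-k) * y^k + Dif u (n+1) * x * y^(n+1) := by
      rw [sum_range_succ, mul_sum]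
      congr 1
      · apply sum_congr rfl
        intro k hk
        rw [mem_range] at hk
        have h : n + 2 - k = (n + 1 - k) + 1 := by omega
        rw [h]; ring
      · have h : n + 2 - (n+1) = 1 := by omega
        rw [h]; ring
    rw [hL, hR]
    have h2 : (x - y) * (x * ∑ k ∈ range (n+1), u k * x^(n-k) * y^k + u (n+1) * y^(n+1))
        = x * ((x-y) * ∑ k ∈ range (n+1), u k * x^(n-k) * y^k) + (x - y) * (u (n+1) * y^(n+1)) := by
      ring
    rw [h2, ih, Dif]
    ring

lemma ff_closed (r : ℕ) : ∀ k, ff r k = ∑ j ∈ range (k+1), ((k+1-j : ℕ):ℝ) * cc r j := by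
  intro k
  induction k with
  | zero => simp [ff_zero, cc_zero]
  | succ k ih =>
    rw [ff_succ, ih, gg]
    have h1 : ∑ j ∈ range (k+2), ((k+1+1-j : ℕ):ℝ) * cc r j
        = ∑ j ∈ range (k+2), (((k+1-j : ℕ):ℝ) + 1) * cc r j := by
      apply sum_congr rfl
      intro j hj
      rw [mem_range] at hj
      have h : (k+1+1-j) = (k+1-j) + 1 := by omega
      rw [h]; push_cast; ring
    rw [h1]
    simp only [add_mul, one_mul, sum_add_distrib]
    have h2 : ∑ j ∈ range (k+2), ((k+1-j : ℕ):ℝ) * cc r j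
        = ∑ j ∈ range (k+1), ((k+1-j : ℕ):ℝ) * cc r j := by
      have e : k + 2 = (k+1) + 1 := rfl
      rw [e, sum_range_succ]; simp
    rw [h2]

lemma B1 (r : ℕ) : ∑ j ∈ range (r+2), cc r j = ((r:ℝ)+1)^(r+1) := by
  have h := add_pow (r:ℝ) 1 (r+1)
  rw [h]
  apply sum_congr rfl
  intro j hj
  simp [cc]; ring

lemma B2 (r : ℕ) : ∑ j ∈ range (r+2), (j:ℝ) * cc r j = ((r:ℝ)+1) * r * ((r:ℝ)+1)^r := by
  rw [sum_range_succ']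
  simp only [Nat.cast_zero, zero_mul, add_zero]
  have hterm : ∀ j, ((j+1:ℕ):ℝ) * cc r (j+1) = ((r:ℝ)+1) * (r:ℝ) * ((r.choose j : ℝ) * (r:ℝ)^j) := by
    intro j
    have h := Nat.add_one_mul_choose_eq r j
    have h' : ((r:ℝ)+1) * (r.choose j : ℝ) = ((r+1).choose (j+1) : ℝ) * ((j:ℝ)+1) := by
      exact_mod_cast h
    simp only [cc, pow_succ]
    push_cast
    linear_combination (-((r:ℝ)^j * (r:ℝ))) * h'
  calc ∑ j ∈ range (r+1), ((j+1:ℕ):ℝ) * cc r (j+1)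
      = ∑ j ∈ range (r+1), ((r:ℝ)+1) * (r:ℝ) * ((r.choose j : ℝ) * (r:ℝ)^j) := by
        apply sum_congr rfl; intro j _; exact hterm j
    _ = ((r:ℝ)+1) * r * ∑ j ∈ range (r+1), (r.choose j : ℝ) * (r:ℝ)^j := by rw [mul_sum]
    _ = ((r:ℝ)+1) * r * ((r:ℝ)+1)^r := by
        congr 1
        have h := add_pow (r:ℝ) 1 r
        rw [h]
        apply sum_congr rfl
        intro j hj
        simp; ring

lemma ff_val (m : ℕ) : ff (m+1) m = ((m:ℝ)+1)^(m+2) := by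
  have h2 : ff (m+1) m = ∑ j ∈ range (m+1), (((m:ℝ)+1) - (j:ℝ)) * cc (m+1) j := by
    rw [ff_closed]
    apply sum_congr rfl
    intro j hj
    rw [mem_range] at hj
    congr 1
    rw [Nat.cast_sub (by omega)]
    push_cast; ring
  have hfull : ∑ j ∈ range (m+1+2), (((m:ℝ)+1) - (j:ℝ)) * cc (m+1) j = 0 := by
    have hs : ∑ j ∈ range (m+1+2), (((m:ℝ)+1) - (j:ℝ)) * cc (m+1) j
        = ((m:ℝ)+1) * ∑ j ∈ range (m+1+2), cc (m+1) j - ∑ j ∈ range (m+1+2), (j:ℝ) * cc (m+1) j := by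
      rw [mul_sum, ← sum_sub_distrib]
      apply sum_congr rfl; intro j _; ring
    rw [hs, B1, B2]
    push_cast
    ring
  have hsplit : ∑ j ∈ range (m+1+2), (((m:ℝ)+1) - (j:ℝ)) * cc (m+1) j
      = ∑ j ∈ range (m+1), (((m:ℝ)+1) - (j:ℝ)) * cc (m+1) j
        + (((m:ℝ)+1) - ((m+1:ℕ):ℝ)) * cc (m+1) (m+1)
        + (((m:ℝ)+1) - ((m+1+1:ℕ):ℝ)) * cc (m+1) (m+1+1) := by
    have e : m+1+2 = (m+1+1)+1 := rfl
    rw [e, sum_range_succ, sum_range_succ]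
  have hc2 : cc (m+1) (m+1+1) = ((m:ℝ)+1)^(m+2) := by
    simp only [cc, Nat.choose_self, Nat.cast_one, one_mul]
    push_cast
    ring
  rw [hsplit] at hfull
  rw [h2]
  have hz : (((m:ℝ)+1) - ((m+1:ℕ):ℝ)) = 0 := by push_cast; ring
  have ho : (((m:ℝ)+1) - ((m+1+1:ℕ):ℝ)) = -1 := by push_cast; ring
  rw [hz, ho, hc2] at hfull
  linarith [hfull]
theorem stmt_2 (r : ℕ) (hr : 1 ≤ r) (a : ℕ → ℝ)
    (h0 : a 0 = 1)
    (h1 : a 1 = 2 * a 0 + (r + 1).choose 1 * (r : ℝ) ^ 1)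
    (hrec : ∀ k : ℕ, a (k + 2) = 2 * a (k + 1) - a k + (r + 1).choose (k + 2) * (r : ℝ) ^ (k + 2))
    (x y : ℝ) :
    (x + r * y) ^ (r + 1) - (r + 1 : ℝ) ^ (r + 1) * x * y ^ r
      = (x - y) ^ 2 * ∑ k ∈ Finset.range r, a k * x ^ (r - 1 - k) * y ^ k := by
  obtain ⟨m, rfl⟩ : ∃ m, r = m + 1 := ⟨r - 1, by omega⟩
  clear hr
  -- a agrees with ff
  have hf1 : ff (m+1) 1 = 2 + cc (m+1) 1 := by
    have h := ff_succ (m+1) 0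
    rw [ff_zero, gg_succ, gg_zero] at h
    norm_num at h
    linarith [h]
  have ha : ∀ k, a k = ff (m+1) k := by
    have key : ∀ k, a k = ff (m+1) k ∧ a (k+1) = ff (m+1) (k+1) := by
      intro k
      induction k with
      | zero =>
        constructor
        · rw [h0, ff_zero]
        · show a 1 = ff (m+1) 1
          rw [h1, h0, hf1, cc, Nat.choose_one_right]
          push_cast
          ring
      | succ k ih =>
        refine ⟨ih.2, ?_⟩
        rw [hrec k, ih.1, ih.2, ff_rec]
        rfl
    exact fun k => (key k).1
  have hS : ∑ k ∈ range (m+1), a k * x ^ (m+1-1-k) * y ^ k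
      = ∑ k ∈ range (m+1), ff (m+1) k * x ^ (m-k) * y ^ k := by
    apply sum_congr rfl
    intro k _
    rw [ha k]
    norm_num
  rw [hS]
  set V : ℕ → ℝ := fun k => if k ≤ m then gg (m+1) k else 0 with hVdef
  have hV1 : V (m+1) = 0 := by simp [hVdef]
  have key1 := tele x y (ff (m+1)) m
  have key1' : (x - y) * ∑ k ∈ range (m+1), ff (m+1) k * x ^ (m-k) * y ^ k
      = (∑ k ∈ range (m+1), gg (m+1) k * x ^ (m+1-k) * y ^ k) - ff (m+1) m * y ^ (m+1) := by
    rw [key1]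
    congr 1
    exact sum_congr rfl fun k _ => by rw [Dif_ff]
  have hv : ∑ k ∈ range (m+1+1), V k * x ^ (m+1-k) * y ^ k
      = ∑ k ∈ range (m+1), gg (m+1) k * x ^ (m+1-k) * y ^ k := by
    rw [sum_range_succ, hV1]
    rw [zero_mul, zero_mul, add_zero]
    exact sum_congr rfl fun k hk => by
      rw [mem_range] at hk
      simp only [hVdef]
      rw [if_pos (by omega : k ≤ m)]
  have key2 := tele x y V (m+1)
  have hDV : ∀ k ∈ range (m+1), Dif V k = cc (m+1) k := by
    intro k hk
    rw [mem_range] at hk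
    cases k with
    | zero =>
      show V 0 = cc (m+1) 0
      simp only [hVdef, if_pos (Nat.zero_le m)]
      rw [gg_zero, cc_zero]
    | succ j =>
      show V (j+1) - V j = cc (m+1) (j+1)
      simp only [hVdef]
      rw [if_pos (by omega : j + 1 ≤ m), if_pos (by omega : j ≤ m), gg_succ]
      ring
  have hDVlast : Dif V (m+1) = -gg (m+1) m := by
    show V (m+1) - V m = _
    rw [hV1]
    simp only [hVdef, if_pos (le_refl m)]
    ring
  have key2' : ∑ k ∈ range (m+1+1), Dif V k * x ^ (m+1+1-k) * y ^ k
      = (∑ k ∈ range (m+1), cc (m+1) k * x ^ (m+1+1-k) * y ^ k) + (-(gg (m+1) m)) * x * y ^ (m+1) := by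
    rw [sum_range_succ]
    congr 1
    · exact sum_congr rfl fun k hk => by rw [hDV k hk]
    · rw [hDVlast]
      have e : m+1+1-(m+1) = 1 := by omega
      rw [e, pow_one]
      try ring
  have hbin : (x + ((m+1:ℕ):ℝ) * y) ^ (m+1+1)
      = ∑ k ∈ range (m+1+1+1), cc (m+1) k * x ^ (m+1+1-k) * y ^ k := by
    rw [add_comm x, add_pow]
    apply sum_congr rfl
    intro k _
    rw [mul_pow, cc]
    ring
  have hbs : ∑ k ∈ range (m+1+1+1), cc (m+1) k * x ^ (m+1+1-k) * y ^ k
      = (∑ k ∈ range (m+1), cc (m+1) k * x ^ (m+1+1-k) * y ^ k)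
        + cc (m+1) (m+1) * x * y ^ (m+1) + cc (m+1) (m+1+1) * y ^ (m+1+1) := by
    rw [sum_range_succ, sum_range_succ]
    have e1 : m+1+1-(m+1) = 1 := by omega
    have e2 : m+1+1-(m+1+1) = 0 := by omega
    rw [e1, e2, pow_one, pow_zero]
    ring
  have hccm1 : cc (m+1) (m+1) = ((m:ℝ)+2) * ((m:ℝ)+1) ^ (m+1) := by
    rw [cc, Nat.choose_succ_self_right]
    push_cast
    ring
  have hccm2 : cc (m+1) (m+1+1) = ((m:ℝ)+1) ^ (m+2) := by
    rw [cc, Nat.choose_self]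
    push_cast
    ring
  have hffm : ff (m+1) m = ((m:ℝ)+1) ^ (m+2) := ff_val m
  have hggm : gg (m+1) m = ((m:ℝ)+1+1) ^ (m+1+1) - cc (m+1) (m+1) - cc (m+1) (m+1+1) := by
    have hb := B1 (m+1)
    have e : (m+1)+2 = (m+1+1)+1 := rfl
    rw [e, sum_range_succ, sum_range_succ] at hb
    have hg : gg (m+1) m = ∑ j ∈ range (m+1), cc (m+1) j := rfl
    rw [hg]
    push_cast at hb
    linarith [hb]
  have hRHS : (x - y) ^ 2 * ∑ k ∈ range (m+1), ff (m+1) k * x ^ (m-k) * y ^ k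
      = (∑ k ∈ range (m+1), cc (m+1) k * x ^ (m+1+1-k) * y ^ k)
        + (-(gg (m+1) m)) * x * y ^ (m+1) - (x - y) * (ff (m+1) m * y ^ (m+1)) := by
    have h1 : (x - y) ^ 2 * ∑ k ∈ range (m+1), ff (m+1) k * x ^ (m-k) * y ^ k
        = (x - y) * ((x - y) * ∑ k ∈ range (m+1), ff (m+1) k * x ^ (m-k) * y ^ k) := by ring
    rw [h1, key1', mul_sub, ← hv, key2, hV1, key2']
    ring
  rw [hRHS, hbin, hbs, hccm1, hccm2, hffm, hggm, hccm1, hccm2]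
  push_cast
  ring
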